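/- arXiv:2510.15152 — 2 statements merged into one kernel-verified Lean document; each statement's English description precedes it below -/
import Mathlib

section
/- Let f(Y) = Σ_i λ_i · E[(L_i + Q_i − Y_i − ξ)^+] over integer vectors Y with 0 ≤ Y_i ≤ B_i and Σ_i Y_i ≤ C, where λ_i > 0, L_i ≥ 0, ξ ≥ 0, and Q_i are integer-valued random variables. Then the greedy procedure that starts from Y_i = B_i and repeatedly decrements the coordinate j minimizing the marginal value λ_j · P(L_j + Q_j − ξ ≥ Y_j), until the capacity constraint Σ_i Y_i ≤ C holds, returns an optimal solution. -/
open MeasureTheory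
open scoped BigOperators

/-- The expected-tail objective `f(Y) = Σ_i λ_i E[(L_i + Q_i - Y_i - ξ)⁺]`. -/
noncomputable def etObj {n : ℕ} {Ω : Type*} [MeasurableSpace Ω] (μ : Measure Ω)
    (lam : Fin n → ℝ) (L : Fin n → ℤ) (ξ : ℤ) (Q : Fin n → Ω → ℤ)
    (Y : Fin n → ℕ) : ℝ :=
  ∑ i, lam i * ∫ ω, ((max (L i + Q i ω - (Y i : ℤ) - ξ) 0 : ℤ) : ℝ) ∂μ

/-- The marginal value `λ_j · P(L_j + Q_j - ξ ≥ y)` of the `y`-th cached block of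
conversation `j`. -/
noncomputable def marg {n : ℕ} {Ω : Type*} [MeasurableSpace Ω] (μ : Measure Ω)
    (lam : Fin n → ℝ) (L : Fin n → ℤ) (ξ : ℤ) (Q : Fin n → Ω → ℤ)
    (j : Fin n) (y : ℕ) : ℝ :=
  lam j * (μ {ω | (y : ℤ) ≤ L j + Q j ω - ξ}).toReal

section aux
variable {n : ℕ} {Ω : Type*} [MeasurableSpace Ω] (μ : Measure Ω) [IsProbabilityMeasure μ]
  (lam : Fin n → ℝ) (L : Fin n → ℤ) (ξ : ℤ) (Q : Fin n → Ω → ℤ)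

lemma marg_nonneg (hlam : ∀ i, 0 < lam i) (i : Fin n) (y : ℕ) :
    0 ≤ marg μ lam L ξ Q i y :=
  mul_nonneg (hlam i).le ENNReal.toReal_nonneg

lemma marg_anti (hlam : ∀ i, 0 < lam i) (i : Fin n) {y y' : ℕ} (h : y ≤ y') :
    marg μ lam L ξ Q i y' ≤ marg μ lam L ξ Q i y := by
  unfold marg
  apply mul_le_mul_of_nonneg_left _ (hlam i).le
  apply ENNReal.toReal_mono (measure_ne_top μ _)
  apply measure_mono
  intro ω hω
  simp only [Set.mem_setOf_eq] at *
  exact le_trans (by exact_mod_cast h) hω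

lemma step_id (hQ : ∀ i, Measurable (Q i))
    (hint : ∀ (i : Fin n) (y : ℤ),
      Integrable (fun ω => ((max (L i + Q i ω - y - ξ) 0 : ℤ) : ℝ)) μ)
    (i : Fin n) (y : ℕ) :
    lam i * ∫ ω, ((max (L i + Q i ω - (y : ℤ) - ξ) 0 : ℤ) : ℝ) ∂μ
      = lam i * ∫ ω, ((max (L i + Q i ω - ((y + 1 : ℕ) : ℤ) - ξ) 0 : ℤ) : ℝ) ∂μ
        + marg μ lam L ξ Q i (y + 1) := by
  have hs : MeasurableSet {ω | ((y + 1 : ℕ) : ℤ) ≤ L i + Q i ω - ξ} :=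
    measurableSet_le measurable_const (by fun_prop)
  have hpt : ∀ ω, ((max (L i + Q i ω - (y : ℤ) - ξ) 0 : ℤ) : ℝ)
      = ((max (L i + Q i ω - ((y + 1 : ℕ) : ℤ) - ξ) 0 : ℤ) : ℝ)
        + Set.indicator {ω | ((y + 1 : ℕ) : ℤ) ≤ L i + Q i ω - ξ} (fun _ => (1 : ℝ)) ω := by
    intro ω
    rw [Set.indicator_apply]
    simp only [Set.mem_setOf_eq]
    set x := L i + Q i ω - ξ with hx
    have hx1 : L i + Q i ω - (y : ℤ) - ξ = x - y := by ring
    have hx2 : L i + Q i ω - ((y + 1 : ℕ) : ℤ) - ξ = x - (y + 1) := by push_cast; ring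
    rw [hx1, hx2]
    split_ifs with h
    · rw [max_eq_left (show (0:ℤ) ≤ x - (y:ℤ) by omega),
        max_eq_left (show (0:ℤ) ≤ x - ((y:ℤ) + 1) by omega)]
      push_cast; ring
    · rw [max_eq_right (show x - (y:ℤ) ≤ 0 by omega),
        max_eq_right (show x - ((y:ℤ) + 1) ≤ 0 by omega)]
      norm_num
  have hint1 := hint i ((y + 1 : ℕ) : ℤ)
  have hind : Integrable
      (Set.indicator {ω | ((y + 1 : ℕ) : ℤ) ≤ L i + Q i ω - ξ} (fun _ => (1 : ℝ))) μ :=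
    (integrable_const (1 : ℝ)).indicator hs
  have : ∫ ω, ((max (L i + Q i ω - (y : ℤ) - ξ) 0 : ℤ) : ℝ) ∂μ
      = ∫ ω, (((max (L i + Q i ω - ((y + 1 : ℕ) : ℤ) - ξ) 0 : ℤ) : ℝ)
        + Set.indicator {ω | ((y + 1 : ℕ) : ℤ) ≤ L i + Q i ω - ξ} (fun _ => (1 : ℝ)) ω) ∂μ :=
    integral_congr_ae (Filter.Eventually.of_forall hpt)
  rw [this, integral_add hint1 hind, integral_indicator_const _ hs]
  unfold marg
  rw [smul_eq_mul, mul_one, mul_add]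
  rfl

lemma telescope (hQ : ∀ i, Measurable (Q i))
    (hint : ∀ (i : Fin n) (y : ℤ),
      Integrable (fun ω => ((max (L i + Q i ω - y - ξ) 0 : ℤ) : ℝ)) μ)
    (i : Fin n) {z b : ℕ} (h : z ≤ b) :
    lam i * ∫ ω, ((max (L i + Q i ω - (z : ℤ) - ξ) 0 : ℤ) : ℝ) ∂μ
      = lam i * ∫ ω, ((max (L i + Q i ω - (b : ℤ) - ξ) 0 : ℤ) : ℝ) ∂μ
        + ∑ y ∈ Finset.Ioc z b, marg μ lam L ξ Q i y := by
  induction b, h using Nat.le_induction with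
  | base => simp
  | succ b hzb ih =>
      rw [Finset.sum_Ioc_succ_top (by omega : z ≤ b), ih,
        step_id μ lam L ξ Q hQ hint i b]
      ring
end aux

lemma sum_compare {α : Type*} [DecidableEq α] (A Bs : Finset α) (c : α → ℝ)
    (hc : ∀ x, 0 ≤ c x) (hcard : A.card ≤ Bs.card)
    (hle : ∀ x ∈ A \ Bs, ∀ y ∈ Bs \ A, c x ≤ c y) :
    ∑ x ∈ A, c x ≤ ∑ x ∈ Bs, c x := by
  rw [← Finset.sum_inter_add_sum_sdiff A Bs c, ← Finset.sum_inter_add_sum_sdiff Bs A c,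
    Finset.inter_comm Bs A]
  have hcard2 : (A \ Bs).card ≤ (Bs \ A).card := by
    have h1 := Finset.card_inter_add_card_sdiff A Bs
    have h2 := Finset.card_inter_add_card_sdiff Bs A
    rw [Finset.inter_comm Bs A] at h2
    omega
  have key : ∑ x ∈ A \ Bs, c x ≤ ∑ x ∈ Bs \ A, c x := by
    rcases (A \ Bs).eq_empty_or_nonempty with he | hne
    · rw [he, Finset.sum_empty]
      exact Finset.sum_nonneg fun x _ => hc x
    · have hBne : (Bs \ A).Nonempty := by
        rw [← Finset.card_pos] at hne ⊢; omega
      obtain ⟨y0, hy0, hy0min⟩ := (Bs \ A).exists_min_image c hBne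
      calc ∑ x ∈ A \ Bs, c x ≤ (A \ Bs).card • c y0 :=
            Finset.sum_le_card_nsmul _ _ _ fun x hx => hle x hx y0 hy0
        _ ≤ (Bs \ A).card • c y0 := nsmul_le_nsmul_left (hc y0) hcard2
        _ ≤ ∑ x ∈ Bs \ A, c x := Finset.card_nsmul_le_sum _ _ _ hy0min
  linarith

/-- The greedy procedure that starts from the upper bounds `B` and repeatedly
decrements a coordinate of minimal marginal value `λ_j P(L_j + Q_j - ξ ≥ Y_j)`
(among positive coordinates) until the capacity constraint holds, returns an
optimal solution of `min Σ_i λ_i E[(L_i + Q_i - Y_i - ξ)⁺]` s.t. `0 ≤ Y ≤ B`,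
`Σ_i Y_i ≤ C`. -/
theorem stmt_6 {n : ℕ} {Ω : Type*} [MeasurableSpace Ω] (μ : Measure Ω)
    [IsProbabilityMeasure μ]
    (lam : Fin n → ℝ) (hlam : ∀ i, 0 < lam i)
    (L : Fin n → ℤ) (hL : ∀ i, 0 ≤ L i) (ξ : ℤ) (hξ : 0 ≤ ξ)
    (Q : Fin n → Ω → ℤ) (hQ : ∀ i, Measurable (Q i))
    (hint : ∀ (i : Fin n) (y : ℤ),
      Integrable (fun ω => ((max (L i + Q i ω - y - ξ) 0 : ℤ) : ℝ)) μ)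
    (B : Fin n → ℕ) (C : ℕ)
    -- the greedy trajectory: `K` decrement steps starting from `B`
    (K : ℕ) (hK : K = (∑ i, B i) - C)
    (Y : ℕ → Fin n → ℕ) (hY0 : Y 0 = B)
    (hstep : ∀ k < K, ∃ j : Fin n, 1 ≤ Y k j ∧
      (∀ j' : Fin n, 1 ≤ Y k j' →
        marg μ lam L ξ Q j (Y k j) ≤ marg μ lam L ξ Q j' (Y k j')) ∧
      Y (k + 1) = Function.update (Y k) j (Y k j - 1)) :
    (∀ i, Y K i ≤ B i) ∧ (∑ i, Y K i ≤ C) ∧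
      ∀ Z : Fin n → ℕ, (∀ i, Z i ≤ B i) → (∑ i, Z i ≤ C) →
        etObj μ lam L ξ Q (Y K) ≤ etObj μ lam L ξ Q Z := by
  -- cost identity
  have cost_id : ∀ Z : Fin n → ℕ, (∀ i, Z i ≤ B i) →
      etObj μ lam L ξ Q Z = etObj μ lam L ξ Q B
        + ∑ i, ∑ y ∈ Finset.Ioc (Z i) (B i), marg μ lam L ξ Q i y := by
    intro Z hZ
    unfold etObj
    rw [← Finset.sum_add_distrib]
    exact Finset.sum_congr rfl fun i _ => telescope μ lam L ξ Q hQ hint i (hZ i)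
  -- greedy decreases pointwise
  have hdec : ∀ k, k < K → ∀ i, Y (k + 1) i ≤ Y k i := by
    intro k hk i
    obtain ⟨j, hj1, _, hupd⟩ := hstep k hk
    rw [hupd]
    rcases eq_or_ne i j with rfl | hne
    · simp
    · rw [Function.update_of_ne hne]
  have hleB : ∀ k, k ≤ K → ∀ i, Y k i ≤ B i := by
    intro k
    induction k with
    | zero => intro _ i; rw [hY0]
    | succ k ih => intro hk i; exact le_trans (hdec k (by omega) i) (ih (by omega) i)
  have hsum : ∀ k, k ≤ K → (∑ i, Y k i) + k = ∑ i, B i := by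
    intro k
    induction k with
    | zero => intro _; simp [hY0]
    | succ k ih =>
        intro hk
        obtain ⟨j, hj1, _, hupd⟩ := hstep k (by omega)
        have e1 : ∑ i, Y (k + 1) i = (Y k j - 1) + ∑ i ∈ Finset.univ \ {j}, Y k i := by
          rw [hupd, Finset.sum_update_of_mem (Finset.mem_univ j)]
        have e2 : ∑ i, Y k i = ∑ i ∈ Finset.univ \ {j}, Y k i + Y k j :=
          Finset.sum_eq_sum_sdiff_singleton_add (Finset.mem_univ j) _
        have ihk := ih (by omega)
        omega
  -- removed blocks are cheaper than kept blocks
  have claimC : ∀ k, k ≤ K → ∀ i (y : ℕ), Y k i < y → y ≤ B i →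
      ∀ i' (y' : ℕ), 1 ≤ y' → y' ≤ Y k i' →
        marg μ lam L ξ Q i y ≤ marg μ lam L ξ Q i' y' := by
    intro k
    induction k with
    | zero =>
        intro _ i y h1 h2 i' y' _ _
        rw [hY0] at h1; exact absurd h2 (by omega)
    | succ k ih =>
        intro hk i y hy1 hy2 i' y' hy'1 hy'2
        obtain ⟨j, hj1, hmin, hupd⟩ := hstep k (by omega)
        have hkept : y' ≤ Y k i' := le_trans hy'2 (hdec k (by omega) i')
        by_cases hold : Y k i < y
        · exact ih (by omega) i y hold hy2 i' y' hy'1 hkept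
        · push_neg at hold
          have hij : i = j := by
            by_contra hne
            have : Y (k + 1) i = Y k i := by rw [hupd, Function.update_of_ne hne]
            omega
          subst hij
          have hYi : Y (k + 1) i = Y k i - 1 := by rw [hupd]; simp
          have hyv : y = Y k i := by omega
          rw [hyv]
          calc marg μ lam L ξ Q i (Y k i) ≤ marg μ lam L ξ Q i' (Y k i') :=
                hmin i' (by omega)
            _ ≤ marg μ lam L ξ Q i' y' := marg_anti μ lam L ξ Q hlam i' hkept
  have haB : ∀ i, Y K i ≤ B i := hleB K le_rfl
  have hsumK : (∑ i, Y K i) + K = ∑ i, B i := hsum K le_rfl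
  have hsumle : ∑ i, Y K i ≤ C := by omega
  refine ⟨haB, hsumle, ?_⟩
  intro Z hZB hZC
  rw [cost_id Z hZB, cost_id (Y K) haB]
  have key : ∑ i, ∑ y ∈ Finset.Ioc (Y K i) (B i), marg μ lam L ξ Q i y
      ≤ ∑ i, ∑ y ∈ Finset.Ioc (Z i) (B i), marg μ lam L ξ Q i y := by
    set c : (_ : Fin n) × ℕ → ℝ := fun p => marg μ lam L ξ Q p.1 p.2 with hc
    set A : Finset ((_ : Fin n) × ℕ) :=
      Finset.univ.sigma (fun i => Finset.Ioc (Y K i) (B i)) with hA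
    set Bs : Finset ((_ : Fin n) × ℕ) :=
      Finset.univ.sigma (fun i => Finset.Ioc (Z i) (B i)) with hBs
    have hAs : ∑ p ∈ A, c p = ∑ i, ∑ y ∈ Finset.Ioc (Y K i) (B i), marg μ lam L ξ Q i y :=
      Finset.sum_sigma _ _ _
    have hBss : ∑ p ∈ Bs, c p = ∑ i, ∑ y ∈ Finset.Ioc (Z i) (B i), marg μ lam L ξ Q i y :=
      Finset.sum_sigma _ _ _
    rw [← hAs, ← hBss]
    have hcardA : A.card + ∑ i, Y K i = ∑ i, B i := by
      rw [hA, Finset.card_sigma]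
      simp only [Nat.card_Ioc]
      rw [← Finset.sum_add_distrib]
      exact Finset.sum_congr rfl fun i _ => Nat.sub_add_cancel (haB i)
    have hcardB : Bs.card + ∑ i, Z i = ∑ i, B i := by
      rw [hBs, Finset.card_sigma]
      simp only [Nat.card_Ioc]
      rw [← Finset.sum_add_distrib]
      exact Finset.sum_congr rfl fun i _ => Nat.sub_add_cancel (hZB i)
    apply sum_compare
    · intro p; exact marg_nonneg μ lam L ξ Q hlam p.1 p.2
    · omega
    · intro x hx y hy
      simp only [hA, hBs, Finset.mem_sdiff, Finset.mem_sigma, Finset.mem_univ,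
        Finset.mem_Ioc, true_and, not_and, not_le, not_lt] at hx hy
      obtain ⟨⟨hx1, hx2⟩, _⟩ := hx
      obtain ⟨⟨hy1, hy2⟩, hy3⟩ := hy
      exact claimC K le_rfl x.1 x.2 hx1 hx2 y.1 y.2 (by omega) (by omega)
  linarith
end

section
/- Let Y* be feasible for: minimize Σ_i λ_i E[(L_i + Q_i − Y_i − ξ)^+] subject to 0 ≤ Y_i ≤ B_i integer and Σ_i Y_i ≤ C. If there exist indices i ≠ j with Y*_j ≥ 1, Y*_i ≤ B_i − 1, and λ_i P(L_i + Q_i − ξ ≥ Y*_i + 1) > λ_j P(L_j + Q_j − ξ ≥ Y*_j), then Y* is not optimal: the exchange Y'_i = Y*_i + 1, Y'_j = Y*_j − 1 (other coordinates unchanged) strictly decreases the objective. -/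
open MeasureTheory
open scoped BigOperators

lemma key_step {Ω : Type*} [MeasurableSpace Ω] (μ : Measure Ω)
    (Z : Ω → ℤ) (hZ : Measurable Z) (y : ℤ)
    (h1 : Integrable (fun ω => ((max (Z ω - y) 0 : ℤ) : ℝ)) μ)
    (h2 : Integrable (fun ω => ((max (Z ω - (y + 1)) 0 : ℤ) : ℝ)) μ) :
    (∫ ω, ((max (Z ω - y) 0 : ℤ) : ℝ) ∂μ) - ∫ ω, ((max (Z ω - (y + 1)) 0 : ℤ) : ℝ) ∂μ
      = (μ {ω | y + 1 ≤ Z ω}).toReal := by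
  rw [← integral_sub h1 h2]
  have heq : (fun ω => ((max (Z ω - y) 0 : ℤ) : ℝ) - ((max (Z ω - (y + 1)) 0 : ℤ) : ℝ))
      = Set.indicator {ω | y + 1 ≤ Z ω} (fun _ => (1 : ℝ)) := by
    funext ω
    by_cases h : y + 1 ≤ Z ω
    · rw [Set.indicator_of_mem (show ω ∈ {ω | y + 1 ≤ Z ω} from h)]
      have h' : (max (Z ω - y) 0 : ℤ) - max (Z ω - (y + 1)) 0 = 1 := by omega
      have := congrArg (Int.cast : ℤ → ℝ) h'
      push_cast at this ⊢
      linarith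
    · rw [Set.indicator_of_notMem (show ω ∉ {ω | y + 1 ≤ Z ω} from h)]
      have h1 : (max (Z ω - y) 0 : ℤ) = 0 := by omega
      have h2 : (max (Z ω - (y + 1)) 0 : ℤ) = 0 := by omega
      rw [h1, h2]; norm_num
  have hms : MeasurableSet {ω | y + 1 ≤ Z ω} := by
    have : {ω | y + 1 ≤ Z ω} = Z ⁻¹' Set.Ici (y + 1) := rfl
    rw [this]; exact hZ measurableSet_Ici
  rw [heq, integral_indicator_const _ hms, smul_eq_mul, mul_one, measureReal_def]


/-- Exchange argument: if `λ_i P(L_i + Q_i - ξ ≥ Y*_i + 1) > λ_j P(L_j + Q_j - ξ ≥ Y*_j)`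
with `Y*_j ≥ 1` and `Y*_i ≤ B_i - 1`, then moving one cached block from `j` to `i`
strictly decreases the objective, so `Y*` is not optimal. -/
theorem stmt_7 {n : ℕ} {Ω : Type*} [MeasurableSpace Ω] (μ : Measure Ω)
    [IsProbabilityMeasure μ]
    (lam : Fin n → ℝ) (hlam : ∀ i, 0 < lam i)
    (L : Fin n → ℤ) (hL : ∀ i, 0 ≤ L i) (ξ : ℤ) (hξ : 0 ≤ ξ)
    (Q : Fin n → Ω → ℤ) (hQ : ∀ i, Measurable (Q i))
    (hint : ∀ (i : Fin n) (y : ℤ),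
      Integrable (fun ω => ((max (L i + Q i ω - y - ξ) 0 : ℤ) : ℝ)) μ)
    (B : Fin n → ℕ) (C : ℕ)
    (Ystar : Fin n → ℕ) (hfeas₁ : ∀ i, Ystar i ≤ B i) (hfeas₂ : ∑ i, Ystar i ≤ C)
    (i j : Fin n) (hij : i ≠ j) (hj1 : 1 ≤ Ystar j) (hiB : Ystar i ≤ B i - 1)
    (hswap : lam j * (μ {ω | (Ystar j : ℤ) ≤ L j + Q j ω - ξ}).toReal <
      lam i * (μ {ω | (Ystar i : ℤ) + 1 ≤ L i + Q i ω - ξ}).toReal) :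
    etObj μ lam L ξ Q
        (Function.update (Function.update Ystar i (Ystar i + 1)) j (Ystar j - 1)) <
      etObj μ lam L ξ Q Ystar := by
  set Y' := Function.update (Function.update Ystar i (Ystar i + 1)) j (Ystar j - 1) with hY'
  -- key identity specialized
  have key : ∀ (k : Fin n) (y : ℤ),
      (∫ ω, ((max (L k + Q k ω - y - ξ) 0 : ℤ) : ℝ) ∂μ)
        - ∫ ω, ((max (L k + Q k ω - (y + 1) - ξ) 0 : ℤ) : ℝ) ∂μ
        = (μ {ω | y + 1 ≤ L k + Q k ω - ξ}).toReal := by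
    intro k y
    have h1 := hint k y
    have h2 := hint k (y + 1)
    have e1 : ∀ ω, L k + Q k ω - y - ξ = (L k + Q k ω - ξ) - y := fun ω => by ring
    have e2 : ∀ ω, L k + Q k ω - (y + 1) - ξ = (L k + Q k ω - ξ) - (y + 1) := fun ω => by ring
    simp_rw [e1] at h1 ⊢
    simp_rw [e2] at h2 ⊢
    exact key_step μ (fun ω => L k + Q k ω - ξ)
      (by measurability) y h1 h2
  have hY'i : Y' i = Ystar i + 1 := by
    rw [hY', Function.update_of_ne hij, Function.update_self]
  have hY'j : Y' j = Ystar j - 1 := by rw [hY', Function.update_self]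
  have hY'k : ∀ k, k ≠ i → k ≠ j → Y' k = Ystar k := by
    intro k hki hkj
    rw [hY', Function.update_of_ne hkj, Function.update_of_ne hki]
  have hdiff : etObj μ lam L ξ Q Y' - etObj μ lam L ξ Q Ystar
      = lam j * (μ {ω | (Ystar j : ℤ) ≤ L j + Q j ω - ξ}).toReal
        - lam i * (μ {ω | (Ystar i : ℤ) + 1 ≤ L i + Q i ω - ξ}).toReal := by
    rw [etObj, etObj, ← Finset.sum_sub_distrib]
    have hzero : ∀ k ∈ Finset.univ, k ∉ ({i, j} : Finset (Fin n)) →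
        lam k * ∫ ω, ((max (L k + Q k ω - (Y' k : ℤ) - ξ) 0 : ℤ) : ℝ) ∂μ
          - lam k * ∫ ω, ((max (L k + Q k ω - (Ystar k : ℤ) - ξ) 0 : ℤ) : ℝ) ∂μ = 0 := by
      intro k _ hk
      simp only [Finset.mem_insert, Finset.mem_singleton, not_or] at hk
      rw [hY'k k hk.1 hk.2]
      ring
    rw [← Finset.sum_subset (Finset.subset_univ ({i, j} : Finset (Fin n))) hzero,
      Finset.sum_pair hij]
    have casti : ((Y' i : ℤ)) = (Ystar i : ℤ) + 1 := by rw [hY'i]; push_cast; ring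
    have castj : ((Y' j : ℤ)) = (Ystar j : ℤ) - 1 := by
      rw [hY'j]; omega
    rw [casti, castj]
    have keyi := key i (Ystar i)
    have keyj := key j ((Ystar j : ℤ) - 1)
    have hj' : (Ystar j : ℤ) - 1 + 1 = (Ystar j : ℤ) := by ring
    rw [hj'] at keyj
    have e3 : (∫ ω, ((max (L j + Q j ω - ((Ystar j : ℤ) - 1) - ξ) 0 : ℤ) : ℝ) ∂μ)
        = (∫ ω, ((max (L j + Q j ω - (Ystar j : ℤ) - ξ) 0 : ℤ) : ℝ) ∂μ)
          + (μ {ω | (Ystar j : ℤ) ≤ L j + Q j ω - ξ}).toReal := by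
      linarith [keyj]
    have e4 : (∫ ω, ((max (L i + Q i ω - ((Ystar i : ℤ) + 1) - ξ) 0 : ℤ) : ℝ) ∂μ)
        = (∫ ω, ((max (L i + Q i ω - (Ystar i : ℤ) - ξ) 0 : ℤ) : ℝ) ∂μ)
          - (μ {ω | (Ystar i : ℤ) + 1 ≤ L i + Q i ω - ξ}).toReal := by
      linarith [keyi]
    rw [e3, e4]
    ring
  linarith [hdiff, hswap]
end
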